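/- Let R be a commutative ring, let h be a formal power series in one variable s over R, let χ denote the constant coefficient of h, and let g ≥ 1 be a natural number. Then in the formal power series ring R[[t]] one has the identity (1 - χ·t)^{g+1} · Σ_{n≥1} c_g(hⁿ)·tⁿ = Σ_{n=1}^{g} c_g((h - χ)ⁿ) · tⁿ · (1 - χ·t)^{g-n}, where c_g(f) denotes the coefficient of s^g in a power series f ∈ R[[s]], χ is regarded as a constant power series, and the finite sum on the right-hand side is a polynomial in t viewed inside R[[t]]. -/

import Mathlib

open PowerSeries

section Aux
open Finset

variable {R : Type*} [CommRing R]

noncomputable def B (χ : R) (k : ℕ) : PowerSeries R :=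
  PowerSeries.mk (fun n => (n.choose k : R) * χ ^ (n - k))

lemma Bstep (χ : R) (k : ℕ) :
    (1 - PowerSeries.C χ * PowerSeries.X) * B χ (k+1) = PowerSeries.X * B χ k := by
  ext m
  rw [sub_mul, one_mul, map_sub, mul_assoc]
  cases m with
  | zero => simp [B, coeff_mk, Nat.choose]
  | succ m =>
    rw [coeff_succ_X_mul, coeff_C_mul, coeff_succ_X_mul]
    simp only [B, coeff_mk]
    have pascal : (m+1).choose (k+1) = m.choose k + m.choose (k+1) := Nat.choose_succ_succ m k
    rcases le_or_gt (k+1) m with hle | hlt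
    · have : χ * χ ^ (m - (k+1)) = χ ^ (m+1-(k+1)) := by
        rw [← pow_succ']
        congr 1
        omega
      rw [mul_left_comm, this, pascal]
      have : m + 1 - (k+1) = m - k := by omega
      rw [this]
      push_cast
      ring
    · have h0 : m.choose (k+1) = 0 := Nat.choose_eq_zero_of_lt hlt
      rw [pascal, h0]
      have : m + 1 - (k + 1) = m - k := by omega
      rw [this]
      push_cast
      ring

lemma Bkey (χ : R) (k : ℕ) :
    (1 - PowerSeries.C χ * PowerSeries.X) ^ (k+1) * B χ k = PowerSeries.X ^ k := by
  induction k with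
  | zero =>
    rw [pow_one, pow_zero]
    ext m
    rw [sub_mul, one_mul, map_sub, mul_assoc]
    cases m with
    | zero => simp [B, coeff_mk]
    | succ m =>
      rw [coeff_C_mul, coeff_succ_X_mul]
      simp [B, coeff_mk, pow_succ', coeff_one]
  | succ k ih =>
    calc (1 - PowerSeries.C χ * PowerSeries.X) ^ (k+2) * B χ (k+1)
        = (1 - PowerSeries.C χ * PowerSeries.X) ^ (k+1) *
            ((1 - PowerSeries.C χ * PowerSeries.X) * B χ (k+1)) := by ring
      _ = PowerSeries.X * ((1 - PowerSeries.C χ * PowerSeries.X) ^ (k+1) * B χ k) := by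
            rw [Bstep]; ring
      _ = PowerSeries.X ^ (k+1) := by rw [ih]; ring

lemma coeff_vanish {u : PowerSeries R} (hu : constantCoeff u = 0) {g k : ℕ} (hgk : g < k) :
    PowerSeries.coeff g (u ^ k) = 0 := by
  obtain ⟨v, hv⟩ := pow_dvd_pow_of_dvd (PowerSeries.X_dvd_iff.mpr hu) k
  rw [hv, coeff_X_pow_mul', if_neg (by omega)]

lemma coeff_decomp (h : PowerSeries R) (g : ℕ) (hg : 1 ≤ g) (χ : R)
    (hχ : χ = PowerSeries.constantCoeff h) (n : ℕ) :
    PowerSeries.coeff g (h ^ n) =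
      ∑ k ∈ Finset.Icc 1 g,
        PowerSeries.coeff g ((h - PowerSeries.C χ) ^ k) * ((n.choose k : R) * χ ^ (n - k)) := by
  set u := h - PowerSeries.C χ with hu
  have hu0 : constantCoeff u = 0 := by simp [hu, hχ]
  have hh : h = u + PowerSeries.C χ := by ring
  have expand : PowerSeries.coeff g (h ^ n) =
      ∑ k ∈ Finset.range (n + 1),
        PowerSeries.coeff g (u ^ k) * ((n.choose k : R) * χ ^ (n - k)) := by
    rw [hh, add_pow, map_sum]
    refine Finset.sum_congr rfl fun k _ => ?_
    rw [← map_pow, ← map_natCast (PowerSeries.C (R := R)) (n.choose k), coeff_mul_C, coeff_mul_C]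
    ring
  have f0 : ∀ k, k = 0 ∨ g < k ∨ n < k →
      PowerSeries.coeff g (u ^ k) * ((n.choose k : R) * χ ^ (n - k)) = 0 := by
    rintro k (rfl | hk | hk)
    · simp only [pow_zero, PowerSeries.coeff_one, if_neg (by omega : ¬ g = 0), zero_mul]
    · rw [coeff_vanish hu0 hk, zero_mul]
    · rw [Nat.choose_eq_zero_of_lt hk]; push_cast; ring
  rw [expand]
  have h1 : ∑ k ∈ Finset.range (n + 1),
      PowerSeries.coeff g (u ^ k) * ((n.choose k : R) * χ ^ (n - k)) =
      ∑ k ∈ Finset.range (max n g + 1),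
      PowerSeries.coeff g (u ^ k) * ((n.choose k : R) * χ ^ (n - k)) := by
    refine Finset.sum_subset (by intro x hx; simp only [Finset.mem_range] at *; omega)
      fun x hx hnx => ?_
    refine f0 x (Or.inr (Or.inr ?_))
    simp only [Finset.mem_range] at hx hnx; omega
  have h2 : ∑ k ∈ Finset.Icc 1 g,
      PowerSeries.coeff g (u ^ k) * ((n.choose k : R) * χ ^ (n - k)) =
      ∑ k ∈ Finset.range (max n g + 1),
      PowerSeries.coeff g (u ^ k) * ((n.choose k : R) * χ ^ (n - k)) := by
    refine Finset.sum_subset (by intro x hx; simp only [Finset.mem_Icc, Finset.mem_range] at *; omega)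
      fun x hx hnx => ?_
    simp only [Finset.mem_Icc, Finset.mem_range] at hx hnx
    refine f0 x ?_
    omega
  rw [h1, ← h2]

end Aux

/-- Let `R` be a commutative ring, `h ∈ R[[s]]` with constant coefficient `χ`, and `g ≥ 1`.
Then in `R[[t]]` one has
`(1 - χt)^(g+1) · Σ_{n≥1} [coeff of s^g in hⁿ]·tⁿ
  = Σ_{n=1}^{g} [coeff of s^g in (h-χ)ⁿ]·tⁿ·(1-χt)^(g-n)`. -/
theorem statement0 (R : Type*) [CommRing R] (h : PowerSeries R) (g : ℕ) (hg : 1 ≤ g)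
    (χ : R) (hχ : χ = PowerSeries.constantCoeff h) :
    (1 - PowerSeries.C χ * PowerSeries.X) ^ (g + 1) *
        PowerSeries.mk (fun n => if n = 0 then 0 else PowerSeries.coeff g (h ^ n)) =
      ∑ n ∈ Finset.Icc 1 g,
        PowerSeries.C (PowerSeries.coeff g ((h - PowerSeries.C χ) ^ n)) *
          PowerSeries.X ^ n * (1 - PowerSeries.C χ * PowerSeries.X) ^ (g - n) := by
  have hmk : PowerSeries.mk (fun n => if n = 0 then (0:R) else PowerSeries.coeff g (h ^ n)) =
      ∑ k ∈ Finset.Icc 1 g,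
        PowerSeries.C (PowerSeries.coeff g ((h - PowerSeries.C χ) ^ k)) * B χ k := by
    ext n
    rw [coeff_mk, map_sum]
    simp only [coeff_C_mul, B, coeff_mk]
    by_cases hn : n = 0
    · subst hn
      rw [if_pos rfl]
      refine (Finset.sum_eq_zero fun k hk => ?_).symm
      have hk1 : 1 ≤ k := (Finset.mem_Icc.mp hk).1
      rw [Nat.choose_eq_zero_of_lt (by omega)]
      push_cast; ring
    · rw [if_neg hn, coeff_decomp h g hg χ hχ n]
  rw [hmk, Finset.mul_sum]
  refine Finset.sum_congr rfl fun k hk => ?_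
  obtain ⟨hk1, hk2⟩ := Finset.mem_Icc.mp hk
  have hpow : (1 - PowerSeries.C χ * PowerSeries.X) ^ (g + 1) =
      (1 - PowerSeries.C χ * PowerSeries.X) ^ (g - k) *
      (1 - PowerSeries.C χ * PowerSeries.X) ^ (k + 1) := by
    rw [← pow_add]; congr 1; omega
  rw [hpow]
  linear_combination ((1 - PowerSeries.C χ * PowerSeries.X) ^ (g - k) *
    PowerSeries.C (PowerSeries.coeff g ((h - PowerSeries.C χ) ^ k))) * (Bkey χ k)
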